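/- For the Krawtchouk polynomials K_n(x; 1/2, N) = ₂F₁(-x, -n; -N; 2) with 0 ≤ x, y, n ≤ N natural numbers and x ≤ y, the product formula holds: K_n(x;1/2,N)·K_n(y;1/2,N) = binom(N,x)^{-1} · Σ_{i} binom(N-y, x-i)·binom(y, i)·K_n(x+y-2i; 1/2, N), where the sum runs over max{0, x+y-N} ≤ i ≤ x. -/

import Mathlib

/-- The Krawtchouk polynomial `K_n(x; 1/2, N) = ₂F₁(-x, -n; -N; 2)`, as the terminating
hypergeometric sum `∑_{j=0}^{min(x,n)} ((-x)_j (-n)_j / ((-N)_j j!)) 2^j`. -/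
noncomputable def krawtchouk (n x N : ℕ) : ℚ :=
  ∑ j ∈ Finset.range (min x n + 1),
    ((ascPochhammer ℚ j).eval (-(x : ℚ)) * (ascPochhammer ℚ j).eval (-(n : ℚ)))
      / ((ascPochhammer ℚ j).eval (-(N : ℚ)) * (Nat.factorial j)) * 2 ^ j

open Finset

lemma comb_sum {α : Type*} [DecidableEq α] (S b : Finset α) (hbS : b ⊆ S) (w : ℕ) :
    ∑ a ∈ S.powersetCard w, (-1:ℚ)^((a ∩ b).card)
      = ∑ j ∈ Finset.range (w+1),
          (-1:ℚ)^j * (b.card.choose j) * ((S.card - b.card).choose (w-j)) := by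
  have step : ∑ a ∈ S.powersetCard w, (-1:ℚ)^((a ∩ b).card)
      = ∑ q ∈ (Finset.range (w+1)).sigma
          (fun j => (b.powersetCard j) ×ˢ ((S\b).powersetCard (w-j))), (-1:ℚ)^q.1 := by
    refine Finset.sum_nbij' (fun a => ⟨(a∩b).card, (a∩b, a\b)⟩)
      (fun q => q.2.1 ∪ q.2.2) ?_ ?_ ?_ ?_ ?_
    · intro a ha
      rw [mem_powersetCard] at ha
      obtain ⟨haS, hac⟩ := ha
      have h1 : (a∩b).card + (a\b).card = w := by rw [card_inter_add_card_sdiff, hac]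
      simp only [Finset.mem_sigma, Finset.mem_range, Finset.mem_product, mem_powersetCard]
      refine ⟨by omega, ⟨inter_subset_right, trivial⟩, ⟨?_, by omega⟩⟩
      exact sdiff_subset_sdiff haS le_rfl
    · rintro ⟨j, u, v⟩ hq
      simp only [Finset.mem_sigma, Finset.mem_range, Finset.mem_product, mem_powersetCard] at hq ⊢
      obtain ⟨hj, ⟨hub, huc⟩, ⟨hvS, hvc⟩⟩ := hq
      have hd : Disjoint u v := by
        refine Finset.disjoint_left.mpr fun m hm hmv => ?_
        exact (Finset.mem_sdiff.mp (hvS hmv)).2 (hub hm)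
      constructor
      · exact Finset.union_subset (hub.trans hbS) (hvS.trans sdiff_subset)
      · rw [Finset.card_union_of_disjoint hd, huc, hvc]; omega
    · intro a ha
      rw [mem_powersetCard] at ha
      ext m
      simp only [Finset.mem_union, Finset.mem_inter, Finset.mem_sdiff]
      tauto
    · rintro ⟨j, u, v⟩ hq
      simp only [Finset.mem_sigma, Finset.mem_range, Finset.mem_product, mem_powersetCard] at hq
      obtain ⟨hj, ⟨hub, huc⟩, ⟨hvS, hvc⟩⟩ := hq
      have h1 : (u ∪ v) ∩ b = u := by
        ext m
        simp only [Finset.mem_inter, Finset.mem_union]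
        constructor
        · rintro ⟨hm1 | hm1, hm2⟩
          · exact hm1
          · exact absurd hm2 (Finset.mem_sdiff.mp (hvS hm1)).2
        · exact fun hm => ⟨Or.inl hm, hub hm⟩
      have h2 : (u ∪ v) \ b = v := by
        ext m
        simp only [Finset.mem_sdiff, Finset.mem_union]
        constructor
        · rintro ⟨hm1 | hm1, hm2⟩
          · exact absurd (hub hm1) hm2
          · exact hm1
        · exact fun hm => ⟨Or.inr hm, (Finset.mem_sdiff.mp (hvS hm)).2⟩
      simp only [h1, h2, huc]
    · intro a ha
      rfl
  rw [step, Finset.sum_sigma]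
  refine Finset.sum_congr rfl fun j hj => ?_
  simp only [Finset.sum_const, Finset.card_product, Finset.card_powersetCard,
    card_sdiff_of_subset hbS, nsmul_eq_mul]
  push_cast
  ring


lemma kraw_eq (n w N : ℕ) :
    krawtchouk n w N = ∑ j ∈ Finset.range (min w n + 1),
      (-2:ℚ)^j * (w.choose j) * (n.choose j) / (N.choose j) := by
  unfold krawtchouk
  refine Finset.sum_congr rfl fun j _ => ?_
  have e : ∀ x : ℕ, (ascPochhammer ℚ j).eval (-(x:ℚ))
      = (-1:ℚ)^j * (j.factorial * x.choose j) := by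
    intro x
    rw [ascPochhammer_eval_neg_eq_descPochhammer, descPochhammer_eval_eq_descFactorial,
      Nat.descFactorial_eq_factorial_mul_choose]
    push_cast; ring
  rw [e, e, e]
  rcases eq_or_ne ((N.choose j : ℚ)) 0 with h | h
  · simp only [h, mul_zero, div_zero, zero_mul, mul_zero, zero_div]
  · have hj2 : (j.factorial : ℚ) ≠ 0 := Nat.cast_ne_zero.mpr (Nat.factorial_ne_zero j)
    have hm1 : ((-1:ℚ))^j ≠ 0 := pow_ne_zero _ (by norm_num)
    have h2 : (-2:ℚ)^j = (-1)^j * 2^j := by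
      rw [← neg_one_mul, mul_pow]
    field_simp
    rw [h2]
    ring

lemma hyp (n w N : ℕ) (hnN : n ≤ N) :
    (N.choose w : ℚ) * krawtchouk n w N
      = ∑ j ∈ Finset.range (w+1), (-1:ℚ)^j * (n.choose j) * ((N-n).choose (w-j)) := by
  rcases lt_or_ge N w with hwN | hwN
  · -- degenerate case w > N : both sides vanish
    rw [Nat.choose_eq_zero_of_lt hwN]
    rw [Nat.cast_zero, zero_mul]
    symm
    refine Finset.sum_eq_zero fun j hj => ?_
    rw [Finset.mem_range] at hj
    rcases le_or_gt j n with h1 | h1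
    · have : (N - n) < (w - j) := by omega
      rw [Nat.choose_eq_zero_of_lt this, Nat.cast_zero, mul_zero]
    · rw [Nat.choose_eq_zero_of_lt h1, Nat.cast_zero, mul_zero, zero_mul]
  · rw [kraw_eq, Finset.mul_sum]
    have step1 : ∑ j ∈ Finset.range (min w n + 1),
        (N.choose w : ℚ) * ((-2:ℚ)^j * (w.choose j) * (n.choose j) / (N.choose j))
        = ∑ j ∈ Finset.range (w+1), (-2:ℚ)^j * (n.choose j) * ((N-j).choose (w-j)) := by
      rw [Finset.sum_subset (Finset.range_subset_range.mpr (by omega : min w n + 1 ≤ w + 1))]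
      · refine Finset.sum_congr rfl fun j hj => ?_
        rw [Finset.mem_range] at hj
        have hjw : j ≤ w := by omega
        have hNj : (N.choose j : ℚ) ≠ 0 :=
          Nat.cast_ne_zero.mpr (Nat.choose_pos (hjw.trans hwN)).ne'
        have hcm : (N.choose w : ℚ) * (w.choose j) = (N.choose j) * ((N-j).choose (w-j)) := by
          have := Nat.choose_mul (n := N) hjw
          exact_mod_cast congrArg (Nat.cast : ℕ → ℚ) this
        field_simp
        linear_combination (n.choose j : ℚ) * hcm
      · intro j hj hj2
        rw [Finset.mem_range] at hj hj2
        have : n < j := by omega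
        rw [Nat.choose_eq_zero_of_lt this]
        simp
    rw [step1]
    -- Vandermonde expansion
    have step2 : ∀ j ∈ Finset.range (w+1),
        (-2:ℚ)^j * (n.choose j) * ((N-j).choose (w-j))
        = ∑ pq ∈ Finset.HasAntidiagonal.antidiagonal (w-j),
            (-2:ℚ)^j * (n.choose j) * ((n-j).choose pq.1 * ((N-n).choose pq.2)) := by
      intro j hj
      rcases le_or_gt j n with h1 | h1
      · have hv : (N - j).choose (w-j) = ((n-j) + (N-n)).choose (w-j) := by
          congr 1; omega
        rw [hv, Nat.add_choose_eq, ← Finset.mul_sum]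
        push_cast
        ring
      · rw [Nat.choose_eq_zero_of_lt h1]
        simp
    have e0 : ∑ x ∈ Finset.range (w+1), ∑ pq ∈ Finset.HasAntidiagonal.antidiagonal (w-x),
          ((-2:ℚ)^x * (n.choose x) * ((n-x).choose pq.1 * ((N-n).choose pq.2)))
        = ∑ q ∈ (Finset.range (w+1)).sigma (fun j => Finset.HasAntidiagonal.antidiagonal (w-j)),
          (-2:ℚ)^q.1 * (n.choose q.1) * ((n-q.1).choose q.2.1 * ((N-n).choose q.2.2)) :=
      (Finset.sum_sigma (Finset.range (w+1)) (fun j => Finset.HasAntidiagonal.antidiagonal (w-j))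
        (fun q => (-2:ℚ)^q.1 * (n.choose q.1) * ((n-q.1).choose q.2.1 * ((N-n).choose q.2.2)))).symm
    have e1 : ∑ q ∈ (Finset.range (w+1)).sigma (fun l => Finset.range (l+1)),
          ((-2:ℚ)^q.2 * (n.choose q.2) * ((n-q.2).choose (q.1-q.2) * ((N-n).choose (w-q.1))))
        = ∑ l ∈ Finset.range (w+1), ∑ j ∈ Finset.range (l+1),
          (-2:ℚ)^j * (n.choose j) * ((n-j).choose (l-j) * ((N-n).choose (w-l))) :=
      Finset.sum_sigma (Finset.range (w+1)) (fun l => Finset.range (l+1))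
        (fun q => (-2:ℚ)^q.2 * (n.choose q.2) * ((n-q.2).choose (q.1-q.2) * ((N-n).choose (w-q.1))))
    have step3 : ∑ q ∈ (Finset.range (w+1)).sigma (fun j => Finset.HasAntidiagonal.antidiagonal (w-j)),
          (-2:ℚ)^q.1 * (n.choose q.1) * ((n-q.1).choose q.2.1 * ((N-n).choose q.2.2))
        = ∑ q ∈ (Finset.range (w+1)).sigma (fun l => Finset.range (l+1)),
          (-2:ℚ)^q.2 * (n.choose q.2) * ((n-q.2).choose (q.1-q.2) * ((N-n).choose (w-q.1))) := by
      refine Finset.sum_nbij' (fun q => ⟨q.1 + q.2.1, q.1⟩) (fun q => ⟨q.2, (q.1 - q.2, w - q.1)⟩)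
        ?_ ?_ ?_ ?_ ?_
      · rintro ⟨j, p, q⟩ hq
        simp only [Finset.mem_sigma, Finset.mem_range, Finset.HasAntidiagonal.mem_antidiagonal] at hq ⊢
        omega
      · rintro ⟨l, j⟩ hq
        simp only [Finset.mem_sigma, Finset.mem_range, Finset.HasAntidiagonal.mem_antidiagonal] at hq ⊢
        omega
      · rintro ⟨j, p, q⟩ hq
        simp only [Finset.mem_sigma, Finset.mem_range, Finset.HasAntidiagonal.mem_antidiagonal] at hq
        have h1 : j + p - j = p := by omega
        have h2 : w - (j + p) = q := by omega
        simp [h1, h2]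
      · rintro ⟨l, j⟩ hq
        simp only [Finset.mem_sigma, Finset.mem_range, Finset.HasAntidiagonal.mem_antidiagonal] at hq
        have h1 : j + (l - j) = l := by omega
        simp [h1]
      · rintro ⟨j, p, q⟩ hq
        simp only [Finset.mem_sigma, Finset.mem_range, Finset.HasAntidiagonal.mem_antidiagonal] at hq
        have e1 : j + p - j = p := by omega
        have e2 : w - (j + p) = q := by omega
        simp only [e1, e2]
    rw [Finset.sum_congr rfl step2, e0, step3, e1]
    refine Finset.sum_congr rfl fun l hl => ?_
    rw [Finset.mem_range] at hl
    -- inner sum over j ≤ l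
    rcases le_or_gt l n with h1 | h1
    · have inner : ∀ j ∈ Finset.range (l+1),
          (-2:ℚ)^j * (n.choose j) * ((n-j).choose (l-j) * ((N-n).choose (w-l)))
          = ((N-n).choose (w-l) : ℚ) * ((n.choose l : ℚ) * ((-2:ℚ)^j * 1^(l-j) * (l.choose j))) := by
        intro j hj
        rw [Finset.mem_range] at hj
        have hcm : (n.choose l : ℚ) * (l.choose j) = (n.choose j) * ((n-j).choose (l-j)) := by
          exact_mod_cast congrArg (Nat.cast : ℕ → ℚ) (Nat.choose_mul (n := n) (k := l) (s := j) (by omega))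
        linear_combination (-((-2:ℚ)^j) * (((N-n).choose (w-l) : ℚ))) * hcm
      rw [Finset.sum_congr rfl inner, ← Finset.mul_sum, ← Finset.mul_sum, ← add_pow]
      norm_num
      ring
    · -- l > n : everything vanishes
      have : ∀ j ∈ Finset.range (l+1),
          (-2:ℚ)^j * (n.choose j) * ((n-j).choose (l-j) * ((N-n).choose (w-l))) = 0 := by
        intro j hj
        rw [Finset.mem_range] at hj
        rcases le_or_gt j n with h2 | h2
        · rw [Nat.choose_eq_zero_of_lt (show n - j < l - j by omega)]
          simp
        · rw [Nat.choose_eq_zero_of_lt h2]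
          simp
      rw [Finset.sum_eq_zero this, Nat.choose_eq_zero_of_lt h1]
      simp

lemma key (N n w : ℕ) (hnN : n ≤ N) :
    ∑ a ∈ (Finset.range N).powersetCard w, (-1:ℚ)^((a ∩ Finset.range n).card)
      = (N.choose w : ℚ) * krawtchouk n w N := by
  rw [comb_sum _ _ (Finset.range_subset_range.mpr hnN) w, Finset.card_range, Finset.card_range,
    hyp n w N hnN]

lemma bin_transfer (N x y i : ℕ) (hix : i ≤ x) (hxy : x ≤ y) (hyN : y ≤ N) :
    ((x+y-2*i).choose (x-i) : ℚ) * ((N-(x+y-2*i)).choose i) * (N.choose (x+y-2*i))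
      = (N.choose y) * ((N-y).choose (x-i)) * (y.choose i) := by
  rcases le_or_gt (x + y - i) N with hc | hc
  · -- nondegenerate case
    set w := x + y - 2*i with hw
    have h1 : x - i ≤ w := by omega
    have h2 : i ≤ N - w := by omega
    have h3 : w ≤ N := by omega
    have h4 : x - i ≤ N - y := by omega
    have h5 : i ≤ y := by omega
    rw [Nat.cast_choose ℚ h1, Nat.cast_choose ℚ h2, Nat.cast_choose ℚ h3,
      Nat.cast_choose ℚ hyN, Nat.cast_choose ℚ h4, Nat.cast_choose ℚ h5]
    have e1 : w - (x - i) = y - i := by omega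
    have e2 : N - w - i = N - y - (x - i) := by omega
    have e3 : N - w = (N - w - i) + i := by omega
    have e4 : N - y = (N - y - (x-i)) + (x-i) := by omega
    have e5 : y - i = w - (x-i) := by omega
    rw [e1, e2]
    field_simp
  · -- both sides vanish
    have hL : N.choose (x+y-2*i) = 0 ∨ (N-(x+y-2*i)).choose i = 0 := by
      rcases le_or_gt (x+y-2*i) N with h | h
      · right; exact Nat.choose_eq_zero_of_lt (by omega)
      · left; exact Nat.choose_eq_zero_of_lt h
    have hR : (N-y).choose (x-i) = 0 := Nat.choose_eq_zero_of_lt (by omega)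
    rcases hL with h | h <;> rw [h, hR] <;> simp

/-- Product formula for the Krawtchouk polynomials `K_n(x; 1/2, N)`:
for `x ≤ y ≤ N` and `n ≤ N`,
`K_n(x)·K_n(y) = binom(N,x)⁻¹ Σ_i binom(N-y, x-i) binom(y, i) K_n(x+y-2i)`,
where the binomial coefficients vanish outside `max{0, x+y-N} ≤ i ≤ x`. -/
theorem krawtchouk_product_formula (N n x y : ℕ) (hxy : x ≤ y) (hyN : y ≤ N) (hnN : n ≤ N) :
    krawtchouk n x N * krawtchouk n y N
      = ((N.choose x : ℚ))⁻¹ *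
        ∑ i ∈ Finset.range (x + 1),
          ((N - y).choose (x - i) : ℚ) * (y.choose i : ℚ) * krawtchouk n (x + y - 2 * i) N := by
  classical
  have hxN : x ≤ N := hxy.trans hyN
  set S : Finset ℕ := Finset.range N with hS
  set b : Finset ℕ := Finset.range n with hb
  set χ : Finset ℕ → ℚ := fun a => (-1:ℚ)^((a ∩ b).card) with hχ
  -- the big index set
  set B := (Finset.range (x+1)).sigma
      (fun i => (S.powersetCard (x+y-2*i)).sigma
        (fun s => (s.powersetCard (x-i)) ×ˢ ((S \ s).powersetCard i))) with hB
  have E2 : ∑ p ∈ (S.powersetCard x) ×ˢ (S.powersetCard y), χ p.1 * χ p.2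
      = ∑ q ∈ B, χ q.2.1 := by
    refine Finset.sum_nbij'
      (fun p => ⟨(p.1 ∩ p.2).card, ⟨(p.1 \ p.2) ∪ (p.2 \ p.1), (p.1 \ p.2, p.1 ∩ p.2)⟩⟩)
      (fun q => (q.2.2.1 ∪ q.2.2.2, (q.2.1 \ q.2.2.1) ∪ q.2.2.2)) ?_ ?_ ?_ ?_ ?_
    · rintro ⟨a, a'⟩ hp
      simp only [Finset.mem_product, Finset.mem_powersetCard] at hp
      obtain ⟨⟨haS, hax⟩, ha'S, ha'y⟩ := hp
      have hi1 : (a ∩ a').card + (a \ a').card = x := by rw [card_inter_add_card_sdiff, hax]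
      have hi2 : (a' ∩ a).card + (a' \ a).card = y := by rw [card_inter_add_card_sdiff, ha'y]
      have hcomm : (a' ∩ a).card = (a ∩ a').card := by rw [Finset.inter_comm]
      have hdisj : Disjoint (a \ a') (a' \ a) := by
        refine Finset.disjoint_left.mpr fun m hm hm' => ?_
        exact (Finset.mem_sdiff.mp hm').2 (Finset.mem_sdiff.mp hm).1
      simp only [hB, Finset.mem_sigma, Finset.mem_range, Finset.mem_product,
        Finset.mem_powersetCard]
      refine ⟨by omega, ⟨?_, ?_⟩, ⟨Finset.subset_union_left, show (a \ a').card = x - (a ∩ a').card from by omega⟩, ?_, trivial⟩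
      · exact Finset.union_subset (Finset.sdiff_subset.trans haS) (Finset.sdiff_subset.trans ha'S)
      · rw [Finset.card_union_of_disjoint hdisj]; omega
      · intro m hm
        rw [Finset.mem_inter] at hm
        rw [Finset.mem_sdiff]
        refine ⟨haS hm.1, fun hc => ?_⟩
        rw [Finset.mem_union, Finset.mem_sdiff, Finset.mem_sdiff] at hc
        tauto
    · rintro ⟨i, s, u, t⟩ hq
      simp only [hB, Finset.mem_sigma, Finset.mem_range, Finset.mem_product,
        Finset.mem_powersetCard] at hq
      obtain ⟨hi, ⟨hsS, hsc⟩, ⟨hus, huc⟩, htS, htc⟩ := hq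
      have htnots : ∀ m ∈ t, m ∉ s := fun m hm => (Finset.mem_sdiff.mp (htS hm)).2
      have hdut : Disjoint u t :=
        Finset.disjoint_left.mpr fun m hm hm' => (htnots m hm') (hus hm)
      have hdst : Disjoint (s \ u) t :=
        Finset.disjoint_left.mpr fun m hm hm' => (htnots m hm') (Finset.mem_sdiff.mp hm).1
      simp only [Finset.mem_product, Finset.mem_powersetCard]
      refine ⟨⟨?_, ?_⟩, ?_, ?_⟩
      · exact Finset.union_subset (hus.trans hsS) (htS.trans Finset.sdiff_subset)
      · rw [Finset.card_union_of_disjoint hdut, huc, htc]; omega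
      · exact Finset.union_subset (Finset.sdiff_subset.trans hsS) (htS.trans Finset.sdiff_subset)
      · rw [Finset.card_union_of_disjoint hdst, Finset.card_sdiff_of_subset hus, hsc, huc, htc]; omega
    · rintro ⟨a, a'⟩ hp
      have h1 : (a \ a') ∪ (a ∩ a') = a := by
        ext m; simp only [Finset.mem_union, Finset.mem_sdiff, Finset.mem_inter]; tauto
      have h2 : (((a \ a') ∪ (a' \ a)) \ (a \ a')) ∪ (a ∩ a') = a' := by
        ext m
        simp only [Finset.mem_union, Finset.mem_sdiff, Finset.mem_inter]
        tauto
      simp only [Prod.mk.injEq]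
      exact ⟨h1, h2⟩
    · rintro ⟨i, s, u, t⟩ hq
      simp only [hB, Finset.mem_sigma, Finset.mem_range, Finset.mem_product,
        Finset.mem_powersetCard] at hq
      obtain ⟨hi, ⟨hsS, hsc⟩, ⟨hus, huc⟩, htS, htc⟩ := hq
      have hus' : ∀ m ∈ u, m ∈ s := fun m hm => hus hm
      have htnots : ∀ m ∈ t, m ∉ s := fun m hm => (Finset.mem_sdiff.mp (htS hm)).2
      have h1 : (u ∪ t) ∩ ((s \ u) ∪ t) = t := by
        ext m
        simp only [Finset.mem_inter, Finset.mem_union, Finset.mem_sdiff]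
        constructor
        · rintro ⟨hm1 | hm1, hm2 | hm2⟩ <;> first | exact hm2 | tauto
        · intro hm; exact ⟨Or.inr hm, Or.inr hm⟩
      have h2 : (u ∪ t) \ ((s \ u) ∪ t) = u := by
        ext m
        simp only [Finset.mem_sdiff, Finset.mem_union, not_or, Finset.mem_sdiff]
        constructor
        · rintro ⟨hm1 | hm1, hm2, hm3⟩
          · exact hm1
          · exact absurd hm1 hm3
        · intro hm
          have hms := hus' m hm
          have hmt : m ∉ t := fun hc => htnots m hc hms
          exact ⟨Or.inl hm, fun hc => hc.2 hm, hmt⟩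
      have h3 : ((s \ u) ∪ t) \ (u ∪ t) = s \ u := by
        ext m
        simp only [Finset.mem_sdiff, Finset.mem_union, not_or, Finset.mem_sdiff]
        constructor
        · rintro ⟨hm1 | hm1, hm2, hm3⟩
          · exact hm1
          · exact absurd hm1 hm3
        · rintro ⟨hm1, hm2⟩
          exact ⟨Or.inl ⟨hm1, hm2⟩, hm2, fun hc => htnots m hc hm1⟩
      have h4 : (u ∪ t) \ ((s \ u) ∪ t) ∪ (((s \ u) ∪ t) \ (u ∪ t)) = s := by
        rw [h2, h3]
        ext m
        simp only [Finset.mem_union, Finset.mem_sdiff]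
        constructor
        · rintro (hm | ⟨hm, _⟩)
          · exact hus' m hm
          · exact hm
        · intro hm
          by_cases hmu : m ∈ u
          · exact Or.inl hmu
          · exact Or.inr ⟨hm, hmu⟩
      have h5 : u ∪ (s \ u) = s := Finset.union_sdiff_of_subset hus
      simp only [h1, h2, h3, h5, htc]
    · rintro ⟨a, a'⟩ hp
      simp only [Finset.mem_product, Finset.mem_powersetCard] at hp
      -- parity computation
      have c1 : (a ∩ b).card = ((a \ a') ∩ b).card + ((a ∩ a') ∩ b).card := by
        have e1 : (a ∩ b) \ a' = (a \ a') ∩ b := by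
          ext m; simp only [Finset.mem_sdiff, Finset.mem_inter]; tauto
        have e2 : (a ∩ b) ∩ a' = (a ∩ a') ∩ b := by
          ext m; simp only [Finset.mem_inter]; tauto
        rw [← e1, ← e2, add_comm, card_inter_add_card_sdiff]
      have c2 : (a' ∩ b).card = ((a' \ a) ∩ b).card + ((a ∩ a') ∩ b).card := by
        have e1 : (a' ∩ b) \ a = (a' \ a) ∩ b := by
          ext m; simp only [Finset.mem_sdiff, Finset.mem_inter]; tauto
        have e2 : (a' ∩ b) ∩ a = (a ∩ a') ∩ b := by
          ext m; simp only [Finset.mem_inter]; tauto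
        rw [← e1, ← e2, add_comm, card_inter_add_card_sdiff]
      have c3 : (((a \ a') ∪ (a' \ a)) ∩ b).card = ((a \ a') ∩ b).card + ((a' \ a) ∩ b).card := by
        rw [Finset.union_inter_distrib_right]
        refine Finset.card_union_of_disjoint ?_
        refine Finset.disjoint_left.mpr fun m hm hm' => ?_
        rw [Finset.mem_inter, Finset.mem_sdiff] at hm hm'
        exact hm'.1.2 hm.1.1
      show (-1:ℚ)^((a ∩ b).card) * (-1:ℚ)^((a' ∩ b).card) = (-1:ℚ)^((((a \ a') ∪ (a' \ a)) ∩ b).card)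
      rw [c1, c2, c3, pow_add, pow_add, pow_add, mul_mul_mul_comm]
      have hk : ((-1:ℚ))^(((a ∩ a') ∩ b).card) * ((-1:ℚ))^(((a ∩ a') ∩ b).card) = 1 := by
        rw [← pow_add]
        exact Even.neg_one_pow ⟨_, rfl⟩
      rw [hk, mul_one]
  -- evaluate the RHS of E2
  have E3 : ∑ q ∈ B, χ q.2.1
      = ∑ i ∈ Finset.range (x+1),
          (((x+y-2*i).choose (x-i) : ℚ) * ((N-(x+y-2*i)).choose i))
            * ((N.choose (x+y-2*i) : ℚ) * krawtchouk n (x+y-2*i) N) := by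
    rw [hB]
    rw [Finset.sum_sigma (Finset.range (x+1))
      (fun i => (S.powersetCard (x+y-2*i)).sigma
        (fun s => (s.powersetCard (x-i)) ×ˢ ((S \ s).powersetCard i)))
      (fun q => χ q.2.1)]
    refine Finset.sum_congr rfl fun i hi => ?_
    rw [Finset.sum_sigma (S.powersetCard (x+y-2*i))
      (fun s => (s.powersetCard (x-i)) ×ˢ ((S \ s).powersetCard i))
      (fun q => χ q.1)]
    have inner : ∀ s ∈ S.powersetCard (x+y-2*i),
        ∑ _p ∈ (s.powersetCard (x-i)) ×ˢ ((S \ s).powersetCard i), χ s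
          = (((x+y-2*i).choose (x-i) : ℚ) * ((N-(x+y-2*i)).choose i)) * χ s := by
      intro s hs
      rw [Finset.mem_powersetCard] at hs
      rw [Finset.sum_const, Finset.card_product, Finset.card_powersetCard,
        Finset.card_powersetCard, Finset.card_sdiff_of_subset hs.1, hs.2, hS, Finset.card_range,
        nsmul_eq_mul]
      push_cast
      ring
    rw [Finset.sum_congr rfl inner, ← Finset.mul_sum]
    rw [key N n (x+y-2*i) hnN]
  have Kx := key N n x hnN
  have Ky := key N n y hnN
  have hNx : ((N.choose x : ℚ)) ≠ 0 := Nat.cast_ne_zero.mpr (Nat.choose_pos hxN).ne'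
  have hNy : ((N.choose y : ℚ)) ≠ 0 := Nat.cast_ne_zero.mpr (Nat.choose_pos hyN).ne'
  have E1 : (∑ a ∈ S.powersetCard x, χ a) * (∑ a ∈ S.powersetCard y, χ a)
      = ∑ p ∈ (S.powersetCard x) ×ˢ (S.powersetCard y), χ p.1 * χ p.2 := by
    rw [Finset.sum_mul_sum]
    exact (Finset.sum_product (S.powersetCard x) (S.powersetCard y)
      (fun p => χ p.1 * χ p.2)).symm
  have M : ((N.choose x : ℚ) * krawtchouk n x N) * ((N.choose y : ℚ) * krawtchouk n y N)
      = ∑ i ∈ Finset.range (x+1),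
          ((N.choose y : ℚ) * (((N-y).choose (x-i) : ℚ) * (y.choose i : ℚ)
            * krawtchouk n (x+y-2*i) N)) := by
    rw [← Kx, ← Ky, E1, E2, E3]
    refine Finset.sum_congr rfl fun i hi => ?_
    rw [Finset.mem_range] at hi
    have := bin_transfer N x y i (by omega) hxy hyN
    linear_combination (krawtchouk n (x+y-2*i) N) * this
  rw [← Finset.mul_sum] at M
  rw [inv_mul_eq_div, eq_div_iff hNx]
  refine mul_left_cancel₀ hNy ?_
  linear_combination M
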